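/- For n ≥ 2, define for x, y ∈ ℝⁿ with x ≠ y the region Ω(x,y) = { z : |z − z₋| < r(1 − t₋²) } where r = |x−y|/2, z₋ is the orthogonal projection of z onto the segment parametrized as z₋(t) = (x+y)/2 + (t/2)(y−x) for t ∈ [−1,1], and t₋ is the corresponding parameter. Then for any x*, r > 0: if |x − x*| < r/10 and |x′ − x*| < r, then Ω(x, x′) ⊆ B(x*, r). -/

import Mathlib

set_option maxHeartbeats 1600000

open RealInnerProductSpace Metric

private lemma key_sq (r c p e s : ℝ) (hr : 0 < r) (hp : 0 ≤ p) (he : 0 ≤ e)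
    (hs1 : -1 ≤ s) (hs2 : s ≤ 1)
    (h1 : (c - p)^2 + e^2 ≤ (r/10)^2) (h2 : (c + p)^2 + e^2 ≤ r^2) :
    (c + p*s)^2 + (e + p*(1 - s^2))^2 ≤ r^2 := by
  have hτ : (0:ℝ) ≤ 1 - s := by linarith
  have hσ : (0:ℝ) ≤ 1 + s := by linarith
  have he10 : e ≤ r/10 := by nlinarith [sq_nonneg (c-p)]
  rcases le_or_gt (-2*c + (1+s)*(2*e - p*s^2)) 0 with hE | hE
  · nlinarith [mul_nonpos_of_nonneg_of_nonpos (mul_nonneg hp hτ) hE]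
  · have hc : c < 2*e := by
      nlinarith [mul_nonneg (mul_nonneg hp hσ) (sq_nonneg s), mul_nonneg hσ he]
    have hpc : p - c ≤ r/10 := by nlinarith [sq_nonneg (c - p + r/10), sq_nonneg e]
    have hp3 : p ≤ 3*r/10 := by linarith
    have h1' : |c - p| ≤ r/10 := by
      rw [abs_le]; constructor <;> nlinarith [sq_nonneg e]
    have hps2 : 0 ≤ p * s^2 := mul_nonneg hp (sq_nonneg s)
    have hb1 : |c + p*s| ≤ 7*r/10 := by
      have h' : c + p*s = (c - p) + p*(1+s) := by ring
      rw [h']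
      have h3 := abs_add_le (c - p) (p*(1+s))
      have h2' : |p*(1+s)| = p*(1+s) := abs_of_nonneg (mul_nonneg hp hσ)
      nlinarith
    have hb2a : 0 ≤ e + p*(1-s^2) := by nlinarith [mul_nonneg (mul_nonneg hp hτ) hσ]
    have hb2b : e + p*(1-s^2) ≤ 4*r/10 := by nlinarith
    have hsq1 : (c + p*s)^2 ≤ (7*r/10)^2 := by
      have h4 := pow_le_pow_left₀ (abs_nonneg (c + p*s)) hb1 2
      rwa [sq_abs] at h4
    have hsq2 : (e + p*(1-s^2))^2 ≤ (4*r/10)^2 := pow_le_pow_left₀ hb2a hb2b 2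
    nlinarith [sq_nonneg r]

theorem stmt_9 (n : ℕ) (hn : 2 ≤ n) :
    ∀ x y : EuclideanSpace ℝ (Fin n), x ≠ y →
    ∀ (xstar : EuclideanSpace ℝ (Fin n)) (r : ℝ), 0 < r →
      dist x xstar < r/10 → dist y xstar < r →
      {z : EuclideanSpace ℝ (Fin n) |
        dist z (midpoint ℝ x y + ⟪z - midpoint ℝ x y, ‖y - x‖⁻¹ • (y - x)⟫ • (‖y - x‖⁻¹ • (y - x)))
          < (‖y - x‖ / 2) *
              (1 - (⟪z - midpoint ℝ x y, ‖y - x‖⁻¹ • (y - x)⟫ / (‖y - x‖ / 2))^2)}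
        ⊆ ball xstar r := by
  intro x y hxy xstar r hr hx hy z hz
  simp only [Set.mem_setOf_eq] at hz
  rw [mem_ball]
  set v : EuclideanSpace ℝ (Fin n) := y - x with hv_def
  have hv : v ≠ 0 := sub_ne_zero.mpr (Ne.symm hxy)
  have hL : 0 < ‖v‖ := norm_pos_iff.mpr hv
  set u : EuclideanSpace ℝ (Fin n) := ‖v‖⁻¹ • v with hu_def
  have hu : ‖u‖ = 1 := by
    rw [hu_def, norm_smul, norm_inv, norm_norm, inv_mul_cancel₀ hL.ne']
  have huu : ⟪u, u⟫ = 1 := by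
    rw [real_inner_self_eq_norm_sq, hu]; norm_num
  set m : EuclideanSpace ℝ (Fin n) := midpoint ℝ x y with hm_def
  set t : ℝ := ⟪z - m, u⟫ with ht_def
  set ρ : ℝ := ‖v‖ / 2 with hρ_def
  have hρ : 0 < ρ := by positivity
  set s : ℝ := t / ρ with hs_def
  have hts : t = ρ * s := by rw [hs_def]; field_simp [hρ.ne']
  set w : EuclideanSpace ℝ (Fin n) := z - m - t • u with hw_def
  have hw_inner : ⟪w, u⟫ = 0 := by
    rw [hw_def, inner_sub_left, real_inner_smul_left, huu, ← ht_def]; ring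
  set c : ℝ := ⟪m - xstar, u⟫ with hc_def
  set d : EuclideanSpace ℝ (Fin n) := m - xstar - c • u with hd_def
  have hd_inner : ⟪d, u⟫ = 0 := by
    rw [hd_def, inner_sub_left, real_inner_smul_left, huu, ← hc_def]; ring
  have hρu : ρ • u = (2⁻¹ : ℝ) • v := by
    rw [hu_def, smul_smul]
    congr 1
    field_simp [hρ_def]
    ring
  have hm2 : m = (2⁻¹ : ℝ) • (x + y) := by
    rw [hm_def, midpoint_eq_smul_add, invOf_eq_inv]
  -- decompositions
  have hxdec : x - xstar = (c - ρ) • u + d := by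
    have : (c - ρ) • u + d = (m - xstar) - ρ • u := by
      rw [hd_def]; module
    rw [this, hρu, hm2, hv_def]; module
  have hydec : y - xstar = (c + ρ) • u + d := by
    have : (c + ρ) • u + d = (m - xstar) + ρ • u := by
      rw [hd_def]; module
    rw [this, hρu, hm2, hv_def]; module
  have hzdec : z - xstar = (c + t) • u + (d + w) := by
    rw [hd_def, hw_def]; module
  -- Pythagoras
  have pyth : ∀ (a : ℝ) (b : EuclideanSpace ℝ (Fin n)), ⟪b, u⟫ = 0 →
      ‖a • u + b‖^2 = a^2 + ‖b‖^2 := by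
    intro a b hb
    rw [norm_add_sq_real, real_inner_smul_left, real_inner_comm, hb, norm_smul, hu]
    simp [mul_pow, sq_abs]
  have hdw_inner : ⟪d + w, u⟫ = 0 := by rw [inner_add_left, hd_inner, hw_inner]; ring
  have hxsq : (c - ρ)^2 + ‖d‖^2 < (r/10)^2 := by
    have h1 : ‖x - xstar‖^2 < (r/10)^2 := by
      have := hx
      rw [dist_eq_norm] at this
      have h0 : (0:ℝ) ≤ ‖x - xstar‖ := norm_nonneg _
      nlinarith
    rwa [hxdec, pyth _ _ hd_inner] at h1
  have hysq : (c + ρ)^2 + ‖d‖^2 < r^2 := by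
    have h1 : ‖y - xstar‖^2 < r^2 := by
      have := hy
      rw [dist_eq_norm] at this
      have h0 : (0:ℝ) ≤ ‖y - xstar‖ := norm_nonneg _
      nlinarith
    rwa [hydec, pyth _ _ hd_inner] at h1
  -- the tube hypothesis
  have hzw : ‖w‖ < ρ * (1 - s^2) := by
    have h1 : dist z (m + t • u) = ‖w‖ := by
      rw [dist_eq_norm, hw_def, sub_add_eq_sub_sub]
    rw [h1] at hz
    convert hz using 2
  have hs2lt : s^2 < 1 := by
    by_contra h
    push_neg at h
    have : ρ * (1 - s^2) ≤ 0 := by nlinarith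
    have := norm_nonneg w
    linarith
  have hs1 : -1 ≤ s := by nlinarith
  have hs2 : s ≤ 1 := by nlinarith
  have hkey := key_sq r c ρ ‖d‖ s hr hρ.le (norm_nonneg d) hs1 hs2 hxsq.le hysq.le
  -- assemble
  have hzfin : ‖z - xstar‖^2 < r^2 := by
    have h1 : ‖z - xstar‖^2 = (c + t)^2 + ‖d + w‖^2 := by
      rw [hzdec, pyth _ _ hdw_inner]
    have h2 : ‖d + w‖ ≤ ‖d‖ + ‖w‖ := norm_add_le _ _
    have h3 : ‖d + w‖^2 ≤ (‖d‖ + ‖w‖)^2 := by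
      have := norm_nonneg (d + w)
      nlinarith
    have h4 : (‖d‖ + ‖w‖)^2 < (‖d‖ + ρ * (1 - s^2))^2 := by
      have h5 : 0 ≤ ‖d‖ + ‖w‖ := by positivity
      have := norm_nonneg w
      nlinarith
    rw [h1, hts]
    calc (c + ρ * s)^2 + ‖d + w‖^2 ≤ (c + ρ * s)^2 + (‖d‖ + ‖w‖)^2 := by linarith
      _ < (c + ρ * s)^2 + (‖d‖ + ρ * (1 - s^2))^2 := by linarith
      _ ≤ r^2 := hkey
  rw [dist_eq_norm]
  have := norm_nonneg (z - xstar)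
  nlinarith
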